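/- Let N ≥ 1 and let V₁,…,V_d : ℝ^e → ℝ^e be bounded vector fields with N bounded derivatives. Let x : [0,1] → ℝ^d be Lipschitz and y = π(0, y₀; x). Then for all 0 ≤ s ≤ t ≤ 1: y_{s,t} − I[y_s, N, S_N(x)_{s,t}] = Σ_{i₁,…,i_N ∈ {1,…,d}} ∫_{s<r₁<⋯<r_N<t} [ V_{i₁}⋯V_{i_N}H(y_{r₁}) − V_{i₁}⋯V_{i_N}H(y_s) ] (x^{i₁})'(r₁)⋯(x^{i_N})'(r_N) dr₁⋯dr_N. -/

import Mathlib

open MeasureTheory Set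

/-- Iterated integral `g^{k,i₁,…,i_k}_{s,t} = ∫_{s<r₁<⋯<r_k<t} dx^{i₁}⋯dx^{i_k}` of the
path with derivative `x'`, indexed by the word `[i₁,…,i_k]`. -/
noncomputable def iterInt {d : ℕ} (x' : ℝ → EuclideanSpace ℝ (Fin d)) :
    List (Fin d) → ℝ → ℝ → ℝ
  | [], _, _ => 1
  | i :: w, s, t => ∫ r in s..t, x' r i * iterInt x' w r t

/-- Iterated application `V_{i₁}⋯V_{i_k} f` of vector fields as first-order differential
operators, `(V f)(y) = Df(y)·V(y)`. -/
noncomputable def vfOp {E F : Type*} [NormedAddCommGroup E] [NormedSpace ℝ E]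
    [NormedAddCommGroup F] [NormedSpace ℝ F] {d : ℕ}
    (V : Fin d → E → E) : List (Fin d) → (E → F) → E → F
  | [], f, y => f y
  | i :: w, f, y => fderiv ℝ (vfOp V w f) y (V i y)

/-- The step-`N` Euler scheme increment
`I[y,N,g] = Σ_{k=1}^N Σ_{i₁,…,i_k} V_{i₁}⋯V_{i_k}H(y) · g^{k,i₁,…,i_k}`. -/
noncomputable def euler {d e : ℕ}
    (V : Fin d → EuclideanSpace ℝ (Fin e) → EuclideanSpace ℝ (Fin e)) (N : ℕ)
    (g : List (Fin d) → ℝ) (y : EuclideanSpace ℝ (Fin e)) : EuclideanSpace ℝ (Fin e) :=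
  ∑ k ∈ Finset.Icc 1 N, ∑ w : Fin k → Fin d, g (List.ofFn w) • vfOp V (List.ofFn w) id y

/-- The iterated integral `∫_{s<r₁<⋯<r_k<t} G(r₁) dx^{i₁}(r₁)⋯dx^{i_k}(r_k)` with an
integrand `G` evaluated at the innermost time `r₁`. -/
noncomputable def remInt {d : ℕ} {F : Type*} [NormedAddCommGroup F] [NormedSpace ℝ F]
    (x' : ℝ → EuclideanSpace ℝ (Fin d)) (G : ℝ → F) : List (Fin d) → ℝ → ℝ → F
  | [], _, _ => 0
  | i :: w, s, t => ∫ r in s..t, (x' r i * iterInt x' w r t) • G r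

/-- `x` is a Lipschitz path on `[0,1]` with (a.e. defined, bounded measurable)
derivative `x'`, encoded via the fundamental theorem of calculus. -/
def IsLipPath {d : ℕ} (x x' : ℝ → EuclideanSpace ℝ (Fin d)) : Prop :=
  Measurable x' ∧ (∃ L : ℝ, ∀ r, ‖x' r‖ ≤ L) ∧
    ∀ t ∈ Set.Icc (0:ℝ) 1, x t = x 0 + ∫ r in (0:ℝ)..t, x' r

/-- `y` is a Lipschitz solution on `[0,1]` of the controlled ODE
`dy = Σᵢ Vᵢ(y) dxⁱ` started at `y₀`. -/
def IsODESol {d e : ℕ} (V : Fin d → EuclideanSpace ℝ (Fin e) → EuclideanSpace ℝ (Fin e))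
    (x' : ℝ → EuclideanSpace ℝ (Fin d)) (y₀ : EuclideanSpace ℝ (Fin e))
    (y : ℝ → EuclideanSpace ℝ (Fin e)) : Prop :=
  (∃ K : NNReal, LipschitzOnWith K y (Set.Icc 0 1)) ∧ y 0 = y₀ ∧
    ∀ t ∈ Set.Icc (0:ℝ) 1, y t = y₀ + ∫ r in (0:ℝ)..t, ∑ i, x' r i • V i (y r)


lemma coord_le_norm {d : ℕ} (v : EuclideanSpace ℝ (Fin d)) (i : Fin d) : |v i| ≤ ‖v‖ := by
  rw [EuclideanSpace.norm_eq]
  have h1 : |v i| = Real.sqrt (‖v i‖ ^ 2) := by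
    rw [Real.sqrt_sq_eq_abs]; simp
  rw [h1]
  apply Real.sqrt_le_sqrt
  exact Finset.single_le_sum (f := fun j => ‖v j‖ ^ 2) (fun j _ => by positivity) (Finset.mem_univ i)

lemma aux_ii {E : Type*} [NormedAddCommGroup E] (f : ℝ → E) {u v : ℝ} (huv : u ≤ v)
    (hm : AEStronglyMeasurable f (volume.restrict (Ioc u v)))
    {C : ℝ} (hC : ∀ r ∈ Ioc u v, ‖f r‖ ≤ C) : IntervalIntegrable f volume u v := by
  rw [intervalIntegrable_iff, uIoc_of_le huv]
  refine Integrable.mono' (integrable_const C) hm ?_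
  filter_upwards [ae_restrict_mem measurableSet_Ioc] with r hr
  exact hC r hr

lemma iterInt_reg {d : ℕ} (x' : ℝ → EuclideanSpace ℝ (Fin d)) (hx'm : Measurable x')
    {L : ℝ} (hL : ∀ r, ‖x' r‖ ≤ L) {t : ℝ} (ht : t ∈ Icc (0:ℝ) 1) :
    ∀ w : List (Fin d), ContinuousOn (fun r => iterInt x' w r t) (Icc 0 1) ∧
      ∀ r ∈ Icc (0:ℝ) 1, |iterInt x' w r t| ≤ L ^ w.length := by
  have hL0 : 0 ≤ L := (norm_nonneg _).trans (hL 0)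
  intro w
  induction w with
  | nil =>
    constructor
    · exact continuousOn_const
    · intro r _; simp [iterInt]
  | cons i w ih =>
    obtain ⟨ihc, ihb⟩ := ih
    set G : ℝ → ℝ := fun u => x' u i * iterInt x' w u t with hG
    have hGb : ∀ u ∈ Icc (0:ℝ) 1, |G u| ≤ L * L ^ w.length := by
      intro u hu
      rw [hG, abs_mul]
      exact mul_le_mul ((coord_le_norm _ i).trans (hL u)) (ihb u hu) (abs_nonneg _) hL0
    have hGm : AEStronglyMeasurable G (volume.restrict (Icc 0 1)) := by
      apply AEStronglyMeasurable.mul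
      · exact (((EuclideanSpace.proj (𝕜 := ℝ) i).continuous.measurable.comp
          hx'm).aestronglyMeasurable)
      · exact ihc.aestronglyMeasurable measurableSet_Icc
    have hGi : IntegrableOn G (Icc 0 1) volume := by
      refine Integrable.mono' (integrable_const (L * L ^ w.length)) hGm ?_
      filter_upwards [ae_restrict_mem measurableSet_Icc] with u hu
      exact hGb u hu
    have hGii : ∀ a b, a ∈ Icc (0:ℝ) 1 → b ∈ Icc (0:ℝ) 1 → IntervalIntegrable G volume a b := by
      intro a b ha hb
      rw [intervalIntegrable_iff]
      exact hGi.mono_set (Set.uIoc_subset_uIcc.trans (uIcc_subset_Icc ha hb))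
    have heq : ∀ r, iterInt x' (i :: w) r t = ∫ u in r..t, G u := fun r => rfl
    constructor
    · have hc : ContinuousOn (fun r => (∫ u in (0:ℝ)..t, G u) - ∫ u in (0:ℝ)..r, G u) (Icc 0 1) := by
        apply continuousOn_const.sub
        have := intervalIntegral.continuousOn_primitive_interval
          (a := 0) (b := 1) (f := G) (μ := volume) (by rwa [uIcc_of_le zero_le_one])
        rwa [uIcc_of_le zero_le_one] at this
      apply hc.congr
      intro r hr
      show iterInt x' (i :: w) r t = _
      rw [heq r, ← intervalIntegral.integral_interval_sub_left
        (hGii 0 t (left_mem_Icc.2 zero_le_one) ht) (hGii 0 r (left_mem_Icc.2 zero_le_one) hr)]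
    · intro r hr
      rw [heq r]
      have hb := intervalIntegral.norm_integral_le_of_norm_le_const
        (f := G) (a := r) (b := t) (C := L * L ^ w.length) ?_
      · have habs : |t - r| ≤ 1 := by
          rw [abs_le]
          constructor <;> [linarith [ht.1, hr.2]; linarith [ht.2, hr.1]]
        calc |∫ u in r..t, G u| ≤ L * L ^ w.length * |t - r| := hb
          _ ≤ L * L ^ w.length * 1 :=
              mul_le_mul_of_nonneg_left habs (by positivity)
          _ = L ^ (i :: w).length := by simp [pow_succ]; ring
      · intro u hu
        have : u ∈ Icc (0:ℝ) 1 := Set.uIoc_subset_uIcc.trans (uIcc_subset_Icc hr ht) hu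
        exact hGb u this



lemma vfOp_contDiff {E : Type*} [NormedAddCommGroup E] [NormedSpace ℝ E] {d N : ℕ}
    (V : Fin d → E → E) (hV : ∀ i, ContDiff ℝ (N : ℕ∞) (V i)) :
    ∀ (w : List (Fin d)) (k : ℕ), w.length + k ≤ N →
      ContDiff ℝ (k : ℕ∞) (vfOp V w (id : E → E)) := by
  intro w
  induction w with
  | nil =>
    intro k _
    have : vfOp V [] (id : E → E) = id := rfl
    rw [this]
    exact contDiff_id
  | cons i w ih =>
    intro k hk
    have h1 : ContDiff ℝ ((k + 1 : ℕ) : ℕ∞) (vfOp V w (id : E → E)) := by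
      apply ih
      simp only [List.length_cons] at hk
      omega
    have h2 : ContDiff ℝ (k : ℕ∞) (fderiv ℝ (vfOp V w (id : E → E))) := by
      apply h1.fderiv_right
      exact_mod_cast le_rfl
    have h3 : ContDiff ℝ (k : ℕ∞) (V i) := by
      apply (hV i).of_le
      exact_mod_cast by omega
    have : vfOp V (i :: w) (id : E → E)
        = fun y => fderiv ℝ (vfOp V w (id : E → E)) y (V i y) := rfl
    rw [this]
    exact h2.clm_apply h3

lemma swapLem {E : Type*} [NormedAddCommGroup E] [NormedSpace ℝ E] [CompleteSpace E]
    (K : ℝ → ℝ) (h : ℝ → E) {s t : ℝ} (hst : s ≤ t)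
    (hKm : AEStronglyMeasurable K (volume.restrict (Ioc s t)))
    (hhm : AEStronglyMeasurable h (volume.restrict (Ioc s t)))
    {CK Ch : ℝ} (hCK0 : 0 ≤ CK) (hCh0 : 0 ≤ Ch)
    (hCK : ∀ r ∈ Ioc s t, |K r| ≤ CK) (hCh : ∀ r ∈ Ioc s t, ‖h r‖ ≤ Ch) :
    ∫ r in s..t, K r • (∫ u in s..r, h u) = ∫ u in s..t, (∫ r in u..t, K r) • h u := by
  set μ : Measure ℝ := volume.restrict (Ioc s t) with hμ
  -- the two-variable function
  set F : ℝ → ℝ → E := fun r u => if u ≤ r then K r • h u else 0 with hF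
  have hFm : AEStronglyMeasurable (Function.uncurry F) (μ.prod μ) := by
    have h1 : AEStronglyMeasurable (fun p : ℝ × ℝ => K p.1) (μ.prod μ) :=
      hKm.comp_quasiMeasurePreserving Measure.quasiMeasurePreserving_fst
    have h2 : AEStronglyMeasurable (fun p : ℝ × ℝ => h p.2) (μ.prod μ) :=
      hhm.comp_quasiMeasurePreserving Measure.quasiMeasurePreserving_snd
    have h3 : AEStronglyMeasurable (fun p : ℝ × ℝ => K p.1 • h p.2) (μ.prod μ) := h1.smul h2
    have h4 : MeasurableSet {p : ℝ × ℝ | p.2 ≤ p.1} :=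
      measurableSet_le measurable_snd measurable_fst
    have heq : Function.uncurry F = Set.indicator {p : ℝ × ℝ | p.2 ≤ p.1}
        (fun p => K p.1 • h p.2) := by
      funext p
      rcases p with ⟨r, u⟩
      simp only [Function.uncurry, hF, Set.indicator, mem_setOf_eq]
    rw [heq]
    exact h3.indicator h4
  have hFi : Integrable (Function.uncurry F) (μ.prod μ) := by
    refine Integrable.mono' (integrable_const (CK * Ch)) hFm ?_
    have hprod : μ.prod μ = (volume.prod volume).restrict (Ioc s t ×ˢ Ioc s t) := by
      rw [hμ, Measure.prod_restrict]
    rw [hprod]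
    filter_upwards [ae_restrict_mem (measurableSet_Ioc.prod measurableSet_Ioc)] with p hp
    rcases p with ⟨r, u⟩
    rcases hp with ⟨hpr, hpu⟩
    simp only [Function.uncurry, hF]
    split_ifs
    · rw [norm_smul, Real.norm_eq_abs]
      exact mul_le_mul (hCK r hpr) (hCh u hpu) (norm_nonneg _) hCK0
    · simp [mul_nonneg hCK0 hCh0]
  have hswap := integral_integral_swap hFi
  -- identify LHS
  have hL : ∫ r, ∫ u, F r u ∂μ ∂μ = ∫ r in s..t, K r • (∫ u in s..r, h u) := by
    rw [intervalIntegral.integral_of_le hst]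
    apply integral_congr_ae
    filter_upwards [ae_restrict_mem measurableSet_Ioc] with r hr
    have hind : (fun u => F r u) = Set.indicator (Iic r) (fun u => K r • h u) := by
      funext u
      simp only [hF, Set.indicator, mem_Iic]
    have hsets : Iic r ∩ Ioc s t = Ioc s r := by
      rw [inter_comm, Ioc_inter_Iic, min_eq_right hr.2]
    calc ∫ u, F r u ∂μ = ∫ u in Iic r, K r • h u ∂μ := by
          rw [hind, integral_indicator measurableSet_Iic]
      _ = ∫ u in Ioc s r, K r • h u := by
          rw [hμ, Measure.restrict_restrict measurableSet_Iic, hsets]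
      _ = K r • ∫ u in Ioc s r, h u := integral_smul _ _
      _ = K r • ∫ u in s..r, h u := by
          rw [intervalIntegral.integral_of_le hr.1.le]
  -- identify RHS
  have hR : ∫ u, ∫ r, F r u ∂μ ∂μ = ∫ u in s..t, (∫ r in u..t, K r) • h u := by
    rw [intervalIntegral.integral_of_le hst]
    apply integral_congr_ae
    filter_upwards [ae_restrict_mem measurableSet_Ioc] with u hu
    have hind : (fun r => F r u) = Set.indicator (Ici u) (fun r => K r • h u) := by
      funext r
      simp only [hF, Set.indicator, mem_Ici]
    have hsets : Ici u ∩ Ioc s t = Icc u t := by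
      ext x
      simp only [mem_inter_iff, mem_Ici, mem_Ioc, mem_Icc]
      constructor
      · rintro ⟨h1, _, h3⟩; exact ⟨h1, h3⟩
      · rintro ⟨h1, h2⟩; exact ⟨h1, lt_of_lt_of_le hu.1 h1, h2⟩
    calc ∫ r, F r u ∂μ = ∫ r in Ici u, K r • h u ∂μ := by
          rw [hind, integral_indicator measurableSet_Ici]
      _ = ∫ r in Icc u t, K r • h u := by
          rw [hμ, Measure.restrict_restrict measurableSet_Ici, hsets]
      _ = ∫ r in Ioc u t, K r • h u := by rw [integral_Icc_eq_integral_Ioc]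
      _ = (∫ r in Ioc u t, K r) • h u := integral_smul_const _ _
      _ = (∫ r in u..t, K r) • h u := by
          rw [intervalIntegral.integral_of_le hu.2]
  rw [← hL, ← hR, hswap]

variable {e : ℕ}
local notation "E" => EuclideanSpace ℝ (Fin e)

set_option maxHeartbeats 1000000 in
lemma chainFTC (f : E → E) (hf : ContDiff ℝ 1 f) (z g : ℝ → E) {s t : ℝ} (hst : s ≤ t)
    (hzg : ∀ u ∈ Icc s t, ∀ v ∈ Icc s t, z v - z u = ∫ r in u..v, g r)
    (hgm : AEStronglyMeasurable g (volume.restrict (Ioc s t)))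
    {C : ℝ} (hC : ∀ r, ‖g r‖ ≤ C) :
    f (z t) - f (z s) = ∫ r in s..t, fderiv ℝ f (z r) (g r) := by
  have hC0 : 0 ≤ C := le_trans (norm_nonneg _) (hC s)
  -- z is Lipschitz with constant C on [s,t]
  have hgm' : ∀ u v, s ≤ u → v ≤ t →
      AEStronglyMeasurable g (volume.restrict (Ioc u v)) :=
    fun u v hu hv => hgm.mono_measure
      (Measure.restrict_mono (Ioc_subset_Ioc hu hv) le_rfl)
  have hgint : ∀ u v, s ≤ u → u ≤ v → v ≤ t → IntervalIntegrable g volume u v :=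
    fun u v hu huv hv => aux_ii g huv (hgm' u v hu hv) (fun r _ => hC r)
  have hzlip : ∀ u ∈ Icc s t, ∀ v ∈ Icc s t, u ≤ v → ‖z v - z u‖ ≤ C * (v - u) := by
    intro u hu v hv huv
    rw [hzg u hu v hv]
    have := intervalIntegral.norm_integral_le_of_norm_le_const
      (f := g) (a := u) (b := v) (C := C) (fun r _ => hC r)
    rwa [abs_of_nonneg (by linarith)] at this
  have hzcont : ContinuousOn z (Icc s t) := by
    apply LipschitzOnWith.continuousOn (K := Real.toNNReal C)
    apply LipschitzOnWith.of_dist_le_mul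
    intro a ha b hb
    rcases le_total a b with h | h
    · rw [dist_comm, dist_eq_norm, Real.dist_eq, abs_of_nonpos (by linarith)]
      calc ‖z b - z a‖ ≤ C * (b - a) := hzlip a ha b hb h
        _ ≤ Real.toNNReal C * (b - a) :=
            mul_le_mul_of_nonneg_right (Real.le_coe_toNNReal C) (by linarith)
        _ = Real.toNNReal C * -(a - b) := by ring
    · rw [dist_eq_norm, Real.dist_eq, abs_of_nonneg (by linarith)]
      calc ‖z a - z b‖ ≤ C * (a - b) := hzlip b hb a ha h
        _ ≤ Real.toNNReal C * (a - b) :=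
            mul_le_mul_of_nonneg_right (Real.le_coe_toNNReal C) (by linarith)
  -- compact ball
  set K : Set E := Metric.closedBall (z s) (2 * C * (t - s) + 1) with hKdef
  have hKcp : IsCompact K := isCompact_closedBall _ _
  have hzK : ∀ r ∈ Icc s t, z r ∈ K := by
    intro r hr
    rw [hKdef, Metric.mem_closedBall, dist_eq_norm]
    have := hzlip s (left_mem_Icc.2 hst) r hr hr.1
    nlinarith [hr.2, hr.1, mul_nonneg hC0 (sub_nonneg.2 hst)]
  have hdf : Continuous (fderiv ℝ f) := hf.continuous_fderiv one_ne_zero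
  obtain ⟨M, hM⟩ := hKcp.exists_bound_of_continuousOn hdf.continuousOn
  have hM0 : 0 ≤ M := le_trans (norm_nonneg _) (hM (z s) (by
    rw [hKdef, Metric.mem_closedBall]; simp; nlinarith [mul_nonneg hC0 (sub_nonneg.2 hst)]))
  set φ : ℝ → E := fun r => fderiv ℝ f (z r) (g r) with hφdef
  have hφm : ∀ u v, s ≤ u → v ≤ t → AEStronglyMeasurable φ (volume.restrict (Ioc u v)) := by
    intro u v hu hv
    have h1 : AEStronglyMeasurable (fun r => fderiv ℝ f (z r)) (volume.restrict (Ioc u v)) := by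
      refine ((hdf.comp_continuousOn (hzcont.mono ?_)).aestronglyMeasurable measurableSet_Ioc)
      exact (Ioc_subset_Icc_self).trans (Icc_subset_Icc hu hv)
    exact isBoundedBilinearMap_apply.continuous.comp_aestronglyMeasurable
      (h1.prodMk (hgm' u v hu hv))
  have hφint : ∀ u v, s ≤ u → u ≤ v → v ≤ t → IntervalIntegrable φ volume u v := by
    intro u v hu huv hv
    refine aux_ii φ huv (hφm u v hu hv) (C := M * C) ?_
    intro r hr
    have hrK : z r ∈ K := hzK r ⟨le_trans hu hr.1.le, le_trans hr.2 hv⟩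
    calc ‖φ r‖ ≤ ‖fderiv ℝ f (z r)‖ * ‖g r‖ := ContinuousLinearMap.le_opNorm _ _
      _ ≤ M * C := mul_le_mul (hM _ hrK) (hC r) (norm_nonneg _) hM0
  rcases eq_or_lt_of_le hst with rfl | hlt
  · simp
  -- reduce to: for all eps > 0, the norm of the defect is at most eps
  rw [← sub_eq_zero, ← norm_le_zero_iff]
  refine le_of_forall_pos_le_add fun ε hε => ?_
  rw [zero_add]
  set ε' : ℝ := ε / ((C + 1) * (t - s)) with hε'def
  have hε' : 0 < ε' := by
    apply div_pos hε
    apply mul_pos (by linarith) (by linarith)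
  -- uniform continuity of the derivative on K
  have hucont : UniformContinuousOn (fderiv ℝ f) K :=
    hKcp.uniformContinuousOn_of_continuous hdf.continuousOn
  obtain ⟨δ, hδ, hδ'⟩ := (Metric.uniformContinuousOn_iff).1 hucont ε' hε'
  -- choose n
  obtain ⟨n, hn⟩ := exists_nat_gt (2 * C * (t - s) / δ)
  have hn0 : 0 < n := by
    by_contra h
    push_neg at h
    interval_cases n
    simp only [Nat.cast_zero] at hn
    have : 0 ≤ 2 * C * (t - s) / δ :=
      div_nonneg (by nlinarith) hδ.le
    linarith
  have hnpos : (0:ℝ) < n := Nat.cast_pos.2 hn0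
  have hstep : 2 * C * ((t - s) / n) < δ := by
    rw [div_lt_iff₀ hδ] at hn
    have h1 : 2 * C * ((t - s) / n) = 2 * C * (t - s) / n := by ring
    rw [h1, div_lt_iff₀ hnpos]
    nlinarith
  have hstep0 : 0 ≤ (t - s) / n := div_nonneg (by linarith) hnpos.le
  set u : ℕ → ℝ := fun k => s + k * ((t - s) / n) with hudef
  have hu0 : u 0 = s := by simp [hudef]
  have hun : u n = t := by
    have h : (t - s) / n * n = t - s := by field_simp [hnpos.ne']
    show s + (n:ℝ) * ((t - s) / n) = t
    linear_combination h
  have humono : ∀ k, u k ≤ u (k + 1) := by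
    intro k
    simp only [hudef, Nat.cast_add, Nat.cast_one]
    nlinarith
  have humem : ∀ k ≤ n, u k ∈ Icc s t := by
    intro k hk
    constructor
    · simp only [hudef]
      nlinarith [mul_nonneg (Nat.cast_nonneg (α := ℝ) k) hstep0]
    · simp only [hudef]
      have : (k:ℝ) ≤ n := Nat.cast_le.2 hk
      rw [← sub_nonneg]
      have h1 : t - (s + k * ((t - s) / n)) = (n - k) * ((t - s) / n) := by
        field_simp; ring
      rw [h1]
      have h2 : (0:ℝ) ≤ n - k := by linarith
      exact mul_nonneg h2 hstep0
  have hudiff : ∀ k, u (k + 1) - u k = (t - s) / n := by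
    intro k
    simp only [hudef, Nat.cast_add, Nat.cast_one]; ring
  -- per-piece estimate
  have key : ∀ k < n, ‖f (z (u (k + 1))) - f (z (u k)) - ∫ r in u k..u (k + 1), φ r‖
      ≤ ε' * C * ((t - s) / n) := by
    intro k hk
    set a := u k with hadef
    set b := u (k + 1) with hbdef
    have ha : a ∈ Icc s t := humem k hk.le
    have hb : b ∈ Icc s t := humem (k + 1) hk
    have hab : a ≤ b := humono k
    have hba : b - a = (t - s) / n := hudiff k
    set A := z a with hA
    set Bp := z b with hB
    set ℓ : ℝ → E := fun θ => A + θ • (Bp - A) with hℓdef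
    have hℓcont : Continuous ℓ := by
      apply continuous_const.add
      exact (continuous_id.smul continuous_const)
    have hℓK : ∀ θ ∈ Icc (0:ℝ) 1, ℓ θ ∈ K := by
      intro θ hθ
      rw [hKdef, Metric.mem_closedBall, dist_eq_norm]
      have h1 : ℓ θ - z s = (A - z s) + θ • (Bp - A) := by
        simp only [hℓdef]; abel
      rw [h1]
      have h2 : ‖A - z s‖ ≤ C * (a - s) := hzlip s (left_mem_Icc.2 hst) a ha ha.1
      have h3 : ‖θ • (Bp - A)‖ ≤ C * (b - a) := by
        rw [norm_smul, Real.norm_eq_abs, abs_of_nonneg hθ.1]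
        calc θ * ‖Bp - A‖ ≤ 1 * ‖Bp - A‖ :=
              mul_le_mul_of_nonneg_right hθ.2 (norm_nonneg _)
          _ = ‖Bp - A‖ := one_mul _
          _ ≤ C * (b - a) := hzlip a ha b hb hab
      calc ‖A - z s + θ • (Bp - A)‖ ≤ ‖A - z s‖ + ‖θ • (Bp - A)‖ := norm_add_le _ _
        _ ≤ C * (a - s) + C * (b - a) := add_le_add h2 h3
        _ ≤ 2 * C * (t - s) + 1 := by nlinarith [ha.1, ha.2, hb.1, hb.2]
    have hclose : ∀ θ ∈ Icc (0:ℝ) 1, ∀ r ∈ Icc a b, ‖fderiv ℝ f (ℓ θ) - fderiv ℝ f (z r)‖ < ε' := by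
      intro θ hθ r hr
      have hrst : r ∈ Icc s t := ⟨le_trans ha.1 hr.1, le_trans hr.2 hb.2⟩
      have h1 : dist (ℓ θ) (z r) < δ := by
        rw [dist_eq_norm]
        have he : ℓ θ - z r = θ • (Bp - A) + (A - z r) := by
          simp only [hℓdef]; abel
        rw [he]
        have h3 : ‖θ • (Bp - A)‖ ≤ C * (b - a) := by
          rw [norm_smul, Real.norm_eq_abs, abs_of_nonneg hθ.1]
          calc θ * ‖Bp - A‖ ≤ 1 * ‖Bp - A‖ :=
                mul_le_mul_of_nonneg_right hθ.2 (norm_nonneg _)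
            _ = ‖Bp - A‖ := one_mul _
            _ ≤ C * (b - a) := hzlip a ha b hb hab
        have h4 : ‖A - z r‖ ≤ C * (r - a) := by
          rw [norm_sub_rev]
          exact hzlip a ha r hrst hr.1
        calc ‖θ • (Bp - A) + (A - z r)‖ ≤ ‖θ • (Bp - A)‖ + ‖A - z r‖ := norm_add_le _ _
          _ ≤ C * (b - a) + C * (r - a) := add_le_add h3 h4
          _ ≤ 2 * C * ((t - s) / n) := by
              have h5 : C * (r - a) ≤ C * (b - a) :=
                mul_le_mul_of_nonneg_left (by linarith [hr.2]) hC0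
              rw [← hba]; linarith
          _ < δ := hstep
      have := hδ' (ℓ θ) (hℓK θ hθ) (z r) (hzK r hrst) h1
      rwa [dist_eq_norm] at this
    -- FTC along the chord
    have hline : ∀ θ : ℝ, HasDerivAt (fun θ => f (ℓ θ)) (fderiv ℝ f (ℓ θ) (Bp - A)) θ := by
      intro θ
      have h1 : HasDerivAt ℓ (Bp - A) θ := by
        have := ((hasDerivAt_id θ).smul_const (Bp - A)).const_add A
        rw [one_smul] at this
        exact this
      have h2 := (hf.differentiable one_ne_zero (ℓ θ)).hasFDerivAt
      exact h2.comp_hasDerivAt θ h1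
    have hcont1 : Continuous fun θ => fderiv ℝ f (ℓ θ) (Bp - A) :=
      isBoundedBilinearMap_apply.continuous.comp ((hdf.comp hℓcont).prodMk continuous_const)
    have hchord : f Bp - f A = ∫ θ in (0:ℝ)..1, fderiv ℝ f (ℓ θ) (Bp - A) := by
      have := intervalIntegral.integral_eq_sub_of_hasDerivAt
        (f := fun θ => f (ℓ θ)) (f' := fun θ => fderiv ℝ f (ℓ θ) (Bp - A))
        (fun θ _ => hline θ) (hcont1.intervalIntegrable 0 1)
      rw [this]
      simp [hℓdef]
    have hgIab : IntervalIntegrable g volume a b := hgint a b ha.1 hab hb.2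
    have hBA : Bp - A = ∫ r in a..b, g r := hzg a ha b hb
    -- the estimate for each θ
    have hθest : ∀ θ ∈ Icc (0:ℝ) 1,
        ‖fderiv ℝ f (ℓ θ) (Bp - A) - ∫ r in a..b, φ r‖ ≤ ε' * C * ((t - s) / n) := by
      intro θ hθ
      have h1 : fderiv ℝ f (ℓ θ) (Bp - A) = ∫ r in a..b, fderiv ℝ f (ℓ θ) (g r) := by
        rw [hBA]
        exact ((fderiv ℝ f (ℓ θ)).intervalIntegral_comp_comm hgIab).symm
      have hint1 : IntervalIntegrable (fun r => fderiv ℝ f (ℓ θ) (g r)) volume a b := by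
        constructor <;> exact (fderiv ℝ f (ℓ θ)).integrable_comp (by
          first
            | exact hgIab.1
            | exact hgIab.2)
      rw [h1, ← intervalIntegral.integral_sub hint1 (hφint a b ha.1 hab hb.2)]
      have hbound : ∀ r ∈ Set.uIoc a b, ‖fderiv ℝ f (ℓ θ) (g r) - φ r‖ ≤ ε' * C := by
        intro r hrm
        rw [Set.uIoc_of_le hab] at hrm
        have hrIcc : r ∈ Icc a b := ⟨hrm.1.le, hrm.2⟩
        have h2 : fderiv ℝ f (ℓ θ) (g r) - φ r
            = (fderiv ℝ f (ℓ θ) - fderiv ℝ f (z r)) (g r) := by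
          simp [hφdef, ContinuousLinearMap.sub_apply]
        rw [h2]
        calc ‖(fderiv ℝ f (ℓ θ) - fderiv ℝ f (z r)) (g r)‖
            ≤ ‖fderiv ℝ f (ℓ θ) - fderiv ℝ f (z r)‖ * ‖g r‖ :=
              ContinuousLinearMap.le_opNorm _ _
          _ ≤ ε' * C := mul_le_mul (hclose θ hθ r hrIcc).le (hC r) (norm_nonneg _) hε'.le
      have hni := intervalIntegral.norm_integral_le_of_norm_le_const hbound
      rwa [abs_of_nonneg (by linarith [hab] : (0:ℝ) ≤ b - a), hba] at hni
    -- combine over θ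
    have hconst : (∫ _ in (0:ℝ)..1, (∫ r in a..b, φ r)) = ∫ r in a..b, φ r := by
      simp
    have hsub : f Bp - f A - ∫ r in a..b, φ r
        = ∫ θ in (0:ℝ)..1, (fderiv ℝ f (ℓ θ) (Bp - A) - ∫ r in a..b, φ r) := by
      rw [intervalIntegral.integral_sub (hcont1.intervalIntegrable 0 1)
        intervalIntegrable_const, hconst, ← hchord]
    rw [hsub]
    have hni2 := intervalIntegral.norm_integral_le_of_norm_le_const
      (C := ε' * C * ((t - s) / n))
      (f := fun θ => fderiv ℝ f (ℓ θ) (Bp - A) - ∫ r in a..b, φ r)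
      (a := 0) (b := 1)
      (fun θ hθm => hθest θ (by
        rw [Set.uIoc_of_le zero_le_one] at hθm; exact ⟨hθm.1.le, hθm.2⟩))
    simpa using hni2
  -- telescoping
  have htel : f (z t) - f (z s) = ∑ k ∈ Finset.range n, (f (z (u (k + 1))) - f (z (u k))) := by
    rw [Finset.sum_range_sub (fun k => f (z (u k))) n, hu0, hun]
  have hadj : ∫ r in s..t, φ r = ∑ k ∈ Finset.range n, ∫ r in u k..u (k + 1), φ r := by
    rw [intervalIntegral.sum_integral_adjacent_intervals (fun k hk =>
      hφint (u k) (u (k + 1)) (humem k hk.le).1 (humono k) (humem (k + 1) hk).2)]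
    rw [hu0, hun]
  calc ‖f (z t) - f (z s) - ∫ r in s..t, φ r‖
      = ‖∑ k ∈ Finset.range n, (f (z (u (k + 1))) - f (z (u k)) - ∫ r in u k..u (k + 1), φ r)‖ := by
        rw [htel, hadj, ← Finset.sum_sub_distrib]
    _ ≤ ∑ k ∈ Finset.range n, ‖f (z (u (k + 1))) - f (z (u k)) - ∫ r in u k..u (k + 1), φ r‖ :=
        norm_sum_le _ _
    _ ≤ ∑ _k ∈ Finset.range n, ε' * C * ((t - s) / n) :=
        Finset.sum_le_sum (fun k hk => key k (Finset.mem_range.1 hk))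
    _ = n * (ε' * C * ((t - s) / n)) := by
        rw [Finset.sum_const, Finset.card_range, nsmul_eq_mul]
    _ ≤ ε := by
        have h1 : (n:ℝ) * (ε' * C * ((t - s) / n)) = ε' * (C * (t - s)) := by
          field_simp
        rw [h1, hε'def, div_mul_eq_mul_div, div_le_iff₀ (by nlinarith : (0:ℝ) < (C + 1) * (t - s))]
        nlinarith



lemma stepLem {d N : ℕ} (V : Fin d → E → E)
    (hV : ∀ i, ContDiff ℝ (N : ℕ∞) (V i))
    (x' : ℝ → EuclideanSpace ℝ (Fin d)) (hx'm : Measurable x')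
    {L : ℝ} (hL : ∀ r, ‖x' r‖ ≤ L)
    (y g : ℝ → E)
    (hy_cont : ContinuousOn y (Icc 0 1))
    (hinc : ∀ u ∈ Icc (0:ℝ) 1, ∀ v ∈ Icc (0:ℝ) 1, y v - y u = ∫ r in u..v, g r)
    (hgdef : ∀ r, g r = ∑ i, x' r i • V i (y r))
    (hgm : AEStronglyMeasurable g (volume.restrict (Icc 0 1)))
    {C : ℝ} (hgC : ∀ r, ‖g r‖ ≤ C)
    (i : Fin d) (w' : List (Fin d)) (hlen : (i :: w').length + 1 ≤ N)
    {s t : ℝ} (hs : 0 ≤ s) (hst : s ≤ t) (ht : t ≤ 1) :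
    remInt x' (fun r => vfOp V (i :: w') id (y r) - vfOp V (i :: w') id (y s)) (i :: w') s t
      = ∑ j : Fin d, (iterInt x' (j :: i :: w') s t • vfOp V (j :: i :: w') id (y s)
          + remInt x' (fun r => vfOp V (j :: i :: w') id (y r)
              - vfOp V (j :: i :: w') id (y s)) (j :: i :: w') s t) := by
  have hL0 : 0 ≤ L := (norm_nonneg _).trans (hL 0)
  have hC0 : 0 ≤ C := (norm_nonneg _).trans (hgC 0)
  have hsmem : s ∈ Icc (0:ℝ) 1 := ⟨hs, hst.trans ht⟩
  have htmem : t ∈ Icc (0:ℝ) 1 := ⟨hs.trans hst, ht⟩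
  have hIccsub : Icc s t ⊆ Icc (0:ℝ) 1 := Icc_subset_Icc hs ht
  have hIocsub : Ioc s t ⊆ Icc (0:ℝ) 1 := Ioc_subset_Icc_self.trans hIccsub
  have hf1 : ContDiff ℝ 1 (vfOp V (i :: w') (id : E → E)) := by
    exact_mod_cast vfOp_contDiff V hV (i :: w') 1 hlen
  -- the chain rule / FTC
  have hKL : ∀ r ∈ Icc s t, vfOp V (i :: w') id (y r) - vfOp V (i :: w') id (y s)
      = ∫ u in s..r, fderiv ℝ (vfOp V (i :: w') (id : E → E)) (y u) (g u) := by
    intro r hr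
    refine chainFTC _ hf1 y g hr.1 ?_ ?_ hgC
    · intro u hu v hv
      exact hinc u (hIccsub ⟨hu.1, hu.2.trans hr.2⟩) v (hIccsub ⟨hv.1, hv.2.trans hr.2⟩)
    · exact hgm.mono_measure (Measure.restrict_mono
        ((Ioc_subset_Ioc le_rfl hr.2).trans hIocsub) le_rfl)
  -- expansion of the derivative term
  have hΦ : ∀ u, fderiv ℝ (vfOp V (i :: w') (id : E → E)) (y u) (g u)
      = ∑ j, x' u j • vfOp V (j :: i :: w') id (y u) := by
    intro u
    rw [hgdef u, map_sum]
    refine Finset.sum_congr rfl fun j _ => ?_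
    rw [(fderiv ℝ (vfOp V (i :: w') (id : E → E)) (y u)).map_smul]
    rfl
  -- measurability and bounds
  have hcoord : ∀ j : Fin d, Measurable fun u => x' u j := fun j =>
    (EuclideanSpace.proj (𝕜 := ℝ) j).continuous.measurable.comp hx'm
  have hiter := iterInt_reg x' hx'm hL htmem
  have hKm : ∀ (j : Fin d) (w : List (Fin d)),
      AEStronglyMeasurable (fun u => x' u j * iterInt x' w u t)
        (volume.restrict (Ioc s t)) := by
    intro j w
    exact ((hcoord j).aestronglyMeasurable).mul
      (((hiter w).1.mono hIocsub).aestronglyMeasurable measurableSet_Ioc)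
  have hKb : ∀ (j : Fin d) (w : List (Fin d)), ∀ u ∈ Ioc s t,
      |x' u j * iterInt x' w u t| ≤ L * L ^ w.length := by
    intro j w u hu
    rw [abs_mul]
    exact mul_le_mul ((coord_le_norm _ j).trans (hL u)) ((hiter w).2 u (hIocsub hu))
      (abs_nonneg _) hL0
  have hfycont : ContinuousOn (fun u => fderiv ℝ (vfOp V (i :: w') (id : E → E)) (y u))
      (Icc 0 1) := (hf1.continuous_fderiv one_ne_zero).comp_continuousOn hy_cont
  obtain ⟨Mf, hMf⟩ := isCompact_Icc.exists_bound_of_continuousOn hfycont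
  have hMf0 : 0 ≤ Mf := (norm_nonneg _).trans (hMf 0 (left_mem_Icc.2 zero_le_one))
  have hΦm : AEStronglyMeasurable
      (fun u => fderiv ℝ (vfOp V (i :: w') (id : E → E)) (y u) (g u))
      (volume.restrict (Ioc s t)) := by
    refine isBoundedBilinearMap_apply.continuous.comp_aestronglyMeasurable
      (AEStronglyMeasurable.prodMk ?_ ?_)
    · exact (hfycont.mono hIocsub).aestronglyMeasurable measurableSet_Ioc
    · exact hgm.mono_measure (Measure.restrict_mono hIocsub le_rfl)
  have hΦb : ∀ u ∈ Ioc s t,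
      ‖fderiv ℝ (vfOp V (i :: w') (id : E → E)) (y u) (g u)‖ ≤ Mf * C := by
    intro u hu
    calc ‖fderiv ℝ (vfOp V (i :: w') (id : E → E)) (y u) (g u)‖
        ≤ ‖fderiv ℝ (vfOp V (i :: w') (id : E → E)) (y u)‖ * ‖g u‖ :=
          ContinuousLinearMap.le_opNorm _ _
      _ ≤ Mf * C := mul_le_mul (hMf u (hIocsub hu)) (hgC u) (norm_nonneg _) hMf0
  -- bounds for the words j :: i :: w'
  have hA : ∀ j : Fin d, ContinuousOn (fun u => vfOp V (j :: i :: w') id (y u)) (Icc 0 1) := by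
    intro j
    have hc : ContDiff ℝ ((0:ℕ) : ℕ∞) (vfOp V (j :: i :: w') (id : E → E)) :=
      vfOp_contDiff V hV (j :: i :: w') 0 (by simpa using hlen)
    exact hc.continuous.comp_continuousOn hy_cont
  -- main computation
  calc remInt x' (fun r => vfOp V (i :: w') id (y r) - vfOp V (i :: w') id (y s)) (i :: w') s t
      = ∫ r in s..t, (x' r i * iterInt x' w' r t)
          • (vfOp V (i :: w') id (y r) - vfOp V (i :: w') id (y s)) := rfl
    _ = ∫ r in s..t, (x' r i * iterInt x' w' r t)
          • (∫ u in s..r, fderiv ℝ (vfOp V (i :: w') (id : E → E)) (y u) (g u)) := by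
        apply intervalIntegral.integral_congr
        intro r hr
        rw [uIcc_of_le hst] at hr
        beta_reduce
        rw [hKL r hr]
    _ = ∫ u in s..t, (∫ r in u..t, x' r i * iterInt x' w' r t)
          • fderiv ℝ (vfOp V (i :: w') (id : E → E)) (y u) (g u) :=
        swapLem _ _ hst (hKm i w') hΦm (by positivity) (mul_nonneg hMf0 hC0)
          (hKb i w') hΦb
    _ = ∫ u in s..t, ∑ j, (x' u j * iterInt x' (i :: w') u t)
          • vfOp V (j :: i :: w') id (y u) := by
        apply intervalIntegral.integral_congr
        intro u _
        have h1 : (∫ r in u..t, x' r i * iterInt x' w' r t) = iterInt x' (i :: w') u t := rfl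
        beta_reduce
        rw [h1, hΦ u, Finset.smul_sum]
        refine Finset.sum_congr rfl fun j _ => ?_
        rw [smul_smul, mul_comm]
    _ = ∑ j, ∫ u in s..t, (x' u j * iterInt x' (i :: w') u t)
          • vfOp V (j :: i :: w') id (y u) := by
        apply intervalIntegral.integral_finset_sum
        intro j _
        obtain ⟨MA, hMA⟩ := isCompact_Icc.exists_bound_of_continuousOn (hA j)
        refine aux_ii _ hst ?_ (C := L * L ^ (i :: w').length * MA) ?_
        · exact (hKm j (i :: w')).smul
            (((hA j).mono hIocsub).aestronglyMeasurable measurableSet_Ioc)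
        · intro u hu
          rw [norm_smul, Real.norm_eq_abs]
          exact mul_le_mul (hKb j (i :: w') u hu) (hMA _ (hIocsub hu)) (norm_nonneg _)
            (by positivity)
    _ = ∑ j : Fin d, (iterInt x' (j :: i :: w') s t • vfOp V (j :: i :: w') id (y s)
          + remInt x' (fun r => vfOp V (j :: i :: w') id (y r)
              - vfOp V (j :: i :: w') id (y s)) (j :: i :: w') s t) := by
        refine Finset.sum_congr rfl fun j _ => ?_
        obtain ⟨MA, hMA⟩ := isCompact_Icc.exists_bound_of_continuousOn (hA j)
        have hMA0 : 0 ≤ MA := (norm_nonneg _).trans (hMA 0 (left_mem_Icc.2 zero_le_one))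
        have hint1 : IntervalIntegrable
            (fun u => (x' u j * iterInt x' (i :: w') u t)
              • (vfOp V (j :: i :: w') id (y u) - vfOp V (j :: i :: w') id (y s)))
            volume s t := by
          refine aux_ii _ hst ?_ (C := L * L ^ (i :: w').length * (MA + MA)) ?_
          · exact (hKm j (i :: w')).smul
              ((((hA j).mono hIocsub).aestronglyMeasurable measurableSet_Ioc).sub
                aestronglyMeasurable_const)
          · intro u hu
            rw [norm_smul, Real.norm_eq_abs]
            refine mul_le_mul (hKb j (i :: w') u hu) ?_ (norm_nonneg _) (by positivity)
            calc ‖vfOp V (j :: i :: w') id (y u) - vfOp V (j :: i :: w') id (y s)‖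
                ≤ ‖vfOp V (j :: i :: w') id (y u)‖ + ‖vfOp V (j :: i :: w') id (y s)‖ :=
                  norm_sub_le _ _
              _ ≤ MA + MA := add_le_add (hMA _ (hIocsub hu)) (hMA _ hsmem)
        have hint2 : IntervalIntegrable
            (fun u => (x' u j * iterInt x' (i :: w') u t)
              • vfOp V (j :: i :: w') id (y s)) volume s t := by
          refine aux_ii _ hst ?_ (C := L * L ^ (i :: w').length * MA) ?_
          · exact (hKm j (i :: w')).smul aestronglyMeasurable_const
          · intro u hu
            rw [norm_smul, Real.norm_eq_abs]
            exact mul_le_mul (hKb j (i :: w') u hu) (hMA _ hsmem) (norm_nonneg _)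
              (by positivity)
        have hsplit : ∀ u, (x' u j * iterInt x' (i :: w') u t)
              • vfOp V (j :: i :: w') id (y u)
            = (x' u j * iterInt x' (i :: w') u t)
              • (vfOp V (j :: i :: w') id (y u) - vfOp V (j :: i :: w') id (y s))
              + (x' u j * iterInt x' (i :: w') u t)
              • vfOp V (j :: i :: w') id (y s) := by
          intro u
          rw [← smul_add]
          congr 1
          abel
        calc ∫ u in s..t, (x' u j * iterInt x' (i :: w') u t)
              • vfOp V (j :: i :: w') id (y u)
            = ∫ u in s..t, ((x' u j * iterInt x' (i :: w') u t)
                • (vfOp V (j :: i :: w') id (y u) - vfOp V (j :: i :: w') id (y s))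
                + (x' u j * iterInt x' (i :: w') u t)
                  • vfOp V (j :: i :: w') id (y s)) := by
              apply intervalIntegral.integral_congr
              intro u _
              beta_reduce
              exact hsplit u
          _ = (∫ u in s..t, (x' u j * iterInt x' (i :: w') u t)
                • (vfOp V (j :: i :: w') id (y u) - vfOp V (j :: i :: w') id (y s)))
              + ∫ u in s..t, (x' u j * iterInt x' (i :: w') u t)
                • vfOp V (j :: i :: w') id (y s) :=
              intervalIntegral.integral_add hint1 hint2
          _ = iterInt x' (j :: i :: w') s t • vfOp V (j :: i :: w') id (y s)
              + remInt x' (fun r => vfOp V (j :: i :: w') id (y r)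
                  - vfOp V (j :: i :: w') id (y s)) (j :: i :: w') s t := by
              rw [add_comm]
              congr 1
              rw [intervalIntegral.integral_smul_const]
              rfl

/-- For `Lip^N` vector fields and a Lipschitz driving path, the remainder
of the step-`N` Euler scheme is the iterated integral, over the `N`-simplex, of the
increment of `V_{i₁}⋯V_{i_N}H` along the solution. -/
theorem statement2 {d e N : ℕ} (hN : 0 < N)
    (V : Fin d → EuclideanSpace ℝ (Fin e) → EuclideanSpace ℝ (Fin e)) (B : ℝ)
    (hV : ∀ i, ContDiff ℝ (N : ℕ∞) (V i))
    (hVb : ∀ i, ∀ k ≤ N, ∀ y, ‖iteratedFDeriv ℝ k (V i) y‖ ≤ B)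
    (x x' : ℝ → EuclideanSpace ℝ (Fin d)) (hx : IsLipPath x x')
    (y₀ : EuclideanSpace ℝ (Fin e)) (y : ℝ → EuclideanSpace ℝ (Fin e))
    (hy : IsODESol V x' y₀ y) :
    ∀ s t : ℝ, 0 ≤ s → s ≤ t → t ≤ 1 →
      y t - y s - euler V N (fun w => iterInt x' w s t) (y s) =
        ∑ w : Fin N → Fin d,
          remInt x'
            (fun r => vfOp V (List.ofFn w) id (y r) - vfOp V (List.ofFn w) id (y s))
            (List.ofFn w) s t := by
  obtain ⟨hx'm, ⟨L, hL⟩, -⟩ := hx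
  obtain ⟨⟨Ky, hylip⟩, hy0, hyeq⟩ := hy
  intro s t hs hst ht
  have hL0 : 0 ≤ L := (norm_nonneg _).trans (hL 0)
  have hy_cont : ContinuousOn y (Icc 0 1) := hylip.continuousOn
  have hsmem : s ∈ Icc (0:ℝ) 1 := ⟨hs, hst.trans ht⟩
  have htmem : t ∈ Icc (0:ℝ) 1 := ⟨hs.trans hst, ht⟩
  have hIocsub : Ioc s t ⊆ Icc (0:ℝ) 1 := Ioc_subset_Icc_self.trans (Icc_subset_Icc hs ht)
  have hVB : ∀ i z, ‖V i z‖ ≤ B := by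
    intro i z
    have := hVb i 0 (Nat.zero_le N) z
    rwa [norm_iteratedFDeriv_zero] at this
  have hcoord : ∀ j : Fin d, Measurable fun u => x' u j := fun j =>
    (EuclideanSpace.proj (𝕜 := ℝ) j).continuous.measurable.comp hx'm
  set g : ℝ → EuclideanSpace ℝ (Fin e) := fun r => ∑ i, x' r i • V i (y r) with hgdef
  have hgdef' : ∀ r, g r = ∑ i, x' r i • V i (y r) := fun r => rfl
  have hgC : ∀ r, ‖g r‖ ≤ d * L * B := by
    intro r
    calc ‖g r‖ ≤ ∑ i, ‖x' r i • V i (y r)‖ := norm_sum_le _ _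
      _ ≤ ∑ _i : Fin d, L * B := by
          refine Finset.sum_le_sum fun i _ => ?_
          rw [norm_smul, Real.norm_eq_abs]
          exact mul_le_mul ((coord_le_norm _ i).trans (hL r)) (hVB i _) (norm_nonneg _) hL0
      _ = d * L * B := by
          rw [Finset.sum_const, Finset.card_univ, Fintype.card_fin, nsmul_eq_mul]
          ring
  have hgm : AEStronglyMeasurable g (volume.restrict (Icc 0 1)) := by
    refine Finset.aestronglyMeasurable_fun_sum _ fun i _ => ?_
    exact ((hcoord i).aestronglyMeasurable).smul
      (((hV i).continuous.comp_continuousOn hy_cont).aestronglyMeasurable measurableSet_Icc)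
  have hginti : ∀ a b, a ∈ Icc (0:ℝ) 1 → b ∈ Icc (0:ℝ) 1 →
      IntervalIntegrable g volume a b := by
    intro a b ha hb
    rw [intervalIntegrable_iff]
    have hgi : IntegrableOn g (Icc 0 1) volume := by
      refine Integrable.mono' (integrable_const (d * L * B)) hgm ?_
      exact Filter.Eventually.of_forall fun r => hgC r
    exact hgi.mono_set (Set.uIoc_subset_uIcc.trans (uIcc_subset_Icc ha hb))
  have hinc : ∀ u ∈ Icc (0:ℝ) 1, ∀ v ∈ Icc (0:ℝ) 1, y v - y u = ∫ r in u..v, g r := by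
    intro u hu v hv
    rw [hyeq v hv, hyeq u hu]
    have h1 : (y₀ + ∫ r in (0:ℝ)..v, g r) - (y₀ + ∫ r in (0:ℝ)..u, g r)
        = (∫ r in (0:ℝ)..v, g r) - ∫ r in (0:ℝ)..u, g r := by abel
    rw [h1, intervalIntegral.integral_interval_sub_left
      (hginti 0 v (left_mem_Icc.2 zero_le_one) hv) (hginti 0 u (left_mem_Icc.2 zero_le_one) hu)]
  -- the statement we prove by induction
  suffices H : ∀ n : ℕ, 1 ≤ n → n ≤ N →
      y t - y s - euler V n (fun w => iterInt x' w s t) (y s) =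
        ∑ w : Fin n → Fin d,
          remInt x'
            (fun r => vfOp V (List.ofFn w) id (y r) - vfOp V (List.ofFn w) id (y s))
            (List.ofFn w) s t by
    exact H N hN le_rfl
  intro n
  induction n with
  | zero => omega
  | succ n ih =>
    intro _ hnN
    rcases Nat.eq_zero_or_pos n with rfl | hn
    · -- base case: n + 1 = 1
      have heuler : euler V 1 (fun w => iterInt x' w s t) (y s)
          = ∑ w : Fin 1 → Fin d, iterInt x' (List.ofFn w) s t
              • vfOp V (List.ofFn w) id (y s) := by
        simp only [euler]
        rw [Finset.Icc_self, Finset.sum_singleton]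
      rw [heuler]
      have hofn : ∀ w : Fin 1 → Fin d, List.ofFn w = [w 0] := by
        intro w
        simp [List.ofFn_succ]
      have hj : ∀ j : Fin d, ∀ z, vfOp V [j] id z = V j z := by
        intro j z
        show fderiv ℝ (vfOp V [] (id : EuclideanSpace ℝ (Fin e) → EuclideanSpace ℝ (Fin e))) z (V j z) = V j z
        have h2 : vfOp V [] (id : EuclideanSpace ℝ (Fin e) → EuclideanSpace ℝ (Fin e)) = id := rfl
        rw [h2, fderiv_id]
        rfl
      -- integrability of each summand
      have hsummand : ∀ j : Fin d, IntervalIntegrable (fun r => x' r j • V j (y r)) volume s t := by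
        intro j
        refine aux_ii _ hst ?_ (C := L * B) ?_
        · exact ((hcoord j).aestronglyMeasurable).smul
            (((hV j).continuous.comp_continuousOn (hy_cont.mono hIocsub)).aestronglyMeasurable
              measurableSet_Ioc)
        · intro r _
          rw [norm_smul, Real.norm_eq_abs]
          exact mul_le_mul ((coord_le_norm _ j).trans (hL r)) (hVB j _) (norm_nonneg _) hL0
      have hbase : y t - y s = ∑ j : Fin d, ∫ r in s..t, x' r j • V j (y r) := by
        rw [hinc s hsmem t htmem]
        rw [intervalIntegral.integral_finset_sum (fun j _ => hsummand j)]
      -- reindex sums over (Fin 1 → Fin d) as sums over Fin d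
      have hre : ∀ F : List (Fin d) → EuclideanSpace ℝ (Fin e),
          ∑ w : Fin 1 → Fin d, F (List.ofFn w) = ∑ j : Fin d, F [j] := by
        intro F
        refine Fintype.sum_equiv (Equiv.funUnique (Fin 1) (Fin d)) _ _ fun w => ?_
        rw [hofn w]
        rfl
      rw [show (∑ w : Fin 1 → Fin d, iterInt x' (List.ofFn w) s t
            • vfOp V (List.ofFn w) id (y s))
          = ∑ j : Fin d, iterInt x' [j] s t • vfOp V [j] id (y s) from
        hre (fun w => iterInt x' w s t • vfOp V w id (y s))]
      rw [show (∑ w : Fin 1 → Fin d, remInt x'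
            (fun r => vfOp V (List.ofFn w) id (y r) - vfOp V (List.ofFn w) id (y s))
            (List.ofFn w) s t)
          = ∑ j : Fin d, remInt x'
            (fun r => vfOp V [j] id (y r) - vfOp V [j] id (y s)) [j] s t from
        hre (fun w => remInt x' (fun r => vfOp V w id (y r) - vfOp V w id (y s)) w s t)]
      rw [hbase, ← Finset.sum_sub_distrib]
      refine Finset.sum_congr rfl fun j _ => ?_
      have h3 : remInt x' (fun r => vfOp V [j] id (y r) - vfOp V [j] id (y s)) [j] s t
          = ∫ r in s..t, (x' r j * 1) • (vfOp V [j] id (y r) - vfOp V [j] id (y s)) := rfl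
      have h4 : iterInt x' [j] s t = ∫ r in s..t, x' r j * 1 := rfl
      rw [h3, h4]
      have h5 : ∀ r, (x' r j * 1) • (vfOp V [j] id (y r) - vfOp V [j] id (y s))
          = x' r j • V j (y r) - (x' r j * 1) • V j (y s) := by
        intro r
        rw [smul_sub, mul_one, hj j, hj j]
      rw [intervalIntegral.integral_congr (g := fun r =>
        x' r j • V j (y r) - (x' r j * 1) • V j (y s)) (fun r _ => h5 r)]
      have hsummand2 : IntervalIntegrable (fun r => (x' r j * 1) • V j (y s)) volume s t := by
        refine aux_ii _ hst ?_ (C := L * B) ?_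
        · exact (((hcoord j).aestronglyMeasurable).mul aestronglyMeasurable_const).smul
            aestronglyMeasurable_const
        · intro r _
          rw [norm_smul, Real.norm_eq_abs, mul_one]
          exact mul_le_mul ((coord_le_norm _ j).trans (hL r)) (hVB j _) (norm_nonneg _) hL0
      rw [intervalIntegral.integral_sub (hsummand j) hsummand2,
        intervalIntegral.integral_smul_const]
      congr 2
      rw [hj j]
    · -- inductive step
      obtain ⟨m, rfl⟩ : ∃ m, n = m + 1 := ⟨n - 1, by omega⟩
      have hstep := ih (by omega) (by omega)
      have heuler : euler V (m + 1 + 1) (fun w => iterInt x' w s t) (y s)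
          = euler V (m + 1) (fun w => iterInt x' w s t) (y s)
            + ∑ w : Fin (m + 1 + 1) → Fin d, iterInt x' (List.ofFn w) s t
                • vfOp V (List.ofFn w) id (y s) := by
        simp only [euler]
        rw [Finset.sum_Icc_succ_top (by omega : 1 ≤ m + 1 + 1)]
      -- apply the step lemma to every word of length m+1
      have happ : ∀ w : Fin (m + 1) → Fin d,
          remInt x' (fun r => vfOp V (List.ofFn w) id (y r) - vfOp V (List.ofFn w) id (y s))
            (List.ofFn w) s t
          = ∑ j : Fin d, (iterInt x' (j :: List.ofFn w) s t
                • vfOp V (j :: List.ofFn w) id (y s)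
              + remInt x' (fun r => vfOp V (j :: List.ofFn w) id (y r)
                  - vfOp V (j :: List.ofFn w) id (y s)) (j :: List.ofFn w) s t) := by
        intro w
        have hofn : List.ofFn w = w 0 :: List.ofFn (fun i => w i.succ) := List.ofFn_succ
        rw [hofn]
        refine stepLem V hV x' hx'm hL y g hy_cont hinc hgdef' hgm hgC (w 0)
          (List.ofFn (fun i => w i.succ)) ?_ hs hst ht
        simp only [List.length_cons, List.length_ofFn]
        omega
      -- reindex words of length m+2 as pairs
      have hre : ∀ F : List (Fin d) → EuclideanSpace ℝ (Fin e),
          ∑ w : Fin (m + 1 + 1) → Fin d, F (List.ofFn w)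
          = ∑ w : Fin (m + 1) → Fin d, ∑ j : Fin d, F (j :: List.ofFn w) := by
        intro F
        calc ∑ v : Fin (m + 1 + 1) → Fin d, F (List.ofFn v)
            = ∑ p : Fin d × (Fin (m + 1) → Fin d), F (p.1 :: List.ofFn p.2) := by
              refine (Fintype.sum_equiv (Fin.consEquiv fun _ => Fin d) _ _ fun p => ?_).symm
              congr 1
              rw [List.ofFn_succ]
              simp [Fin.consEquiv]
          _ = ∑ j : Fin d, ∑ w : Fin (m + 1) → Fin d, F (j :: List.ofFn w) :=
              Fintype.sum_prod_type _
          _ = ∑ w : Fin (m + 1) → Fin d, ∑ j : Fin d, F (j :: List.ofFn w) :=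
              Finset.sum_comm
      rw [heuler, hre (fun w => iterInt x' w s t • vfOp V w id (y s)),
        hre (fun w => remInt x' (fun r => vfOp V w id (y r) - vfOp V w id (y s)) w s t)]
      have h6 : y t - y s - (euler V (m + 1) (fun w => iterInt x' w s t) (y s)
            + ∑ w : Fin (m + 1) → Fin d, ∑ j : Fin d,
                iterInt x' (j :: List.ofFn w) s t • vfOp V (j :: List.ofFn w) id (y s))
          = (y t - y s - euler V (m + 1) (fun w => iterInt x' w s t) (y s))
            - ∑ w : Fin (m + 1) → Fin d, ∑ j : Fin d,
                iterInt x' (j :: List.ofFn w) s t • vfOp V (j :: List.ofFn w) id (y s) := by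
        abel
      rw [h6, hstep]
      rw [Finset.sum_congr rfl fun w _ => happ w]
      rw [← Finset.sum_sub_distrib]
      refine Finset.sum_congr rfl fun w _ => ?_
      rw [Finset.sum_add_distrib]
      abel
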